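/- Let f : X → Y be a mapping between normed spaces that is Fréchet differentiable at x̄ ∈ X with derivative Df(x̄). Then f is strongly metrically subregular at x̄ if and only if α(Df(x̄)) > 0, and in that case subreg f(x̄) ≤ 1/α(Df(x̄)). In particular, if X and Y are finite-dimensional, f is strongly metrically subregular at x̄ if and only if ker Df(x̄) = {0}. -/

import Mathlib

open Filter Topology Metric Set ENNReal

/-- Strong metric subregularity of a single-valued map between normed spaces at `xb`. -/
def IsStronglyMetricallySubregularMap {X Y : Type*}
    [NormedAddCommGroup X] [NormedAddCommGroup Y] (f : X → Y) (xb : X) : Prop :=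
  ∃ κ : ℝ, 0 ≤ κ ∧ ∃ r : ℝ, 0 < r ∧ ∀ x ∈ Metric.closedBall xb r,
    ‖x - xb‖ ≤ κ * ‖f x - f xb‖

/-- The modulus of subregularity of a single-valued map. -/
noncomputable def subregModMap {X Y : Type*}
    [NormedAddCommGroup X] [NormedAddCommGroup Y] (f : X → Y) (xb : X) : ℝ :=
  sInf {κ : ℝ | 0 ≤ κ ∧ ∃ r : ℝ, 0 < r ∧ ∀ x ∈ Metric.closedBall xb r,
    ‖x - xb‖ ≤ κ * ‖f x - f xb‖}

/-- The injectivity constant `α(f) = inf_{‖u‖=1} ‖f u‖` (as an extended nonnegative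
real; `+∞` if the unit sphere is empty). -/
noncomputable def injConst {X Y : Type*}
    [NormedAddCommGroup X] [NormedAddCommGroup Y] (f : X → Y) : ℝ≥0∞ :=
  ⨅ u : {u : X // ‖u‖ = 1}, ENNReal.ofReal ‖f u.1‖

section Aux

variable {X Y : Type*} [NormedAddCommGroup X] [NormedSpace ℝ X]
  [NormedAddCommGroup Y] [NormedSpace ℝ Y]

lemma aux_le_injConst (Λ : X → Y) {c : ℝ} (h : ∀ u : X, ‖u‖ = 1 → c ≤ ‖Λ u‖) :
    ENNReal.ofReal c ≤ injConst Λ :=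
  le_iInf fun u => ENNReal.ofReal_le_ofReal (h u.1 u.2)

lemma aux_scale (Λ : X →L[ℝ] Y) {c : ℝ} (h : ∀ u : X, ‖u‖ = 1 → c ≤ ‖Λ u‖) (x : X) :
    c * ‖x‖ ≤ ‖Λ x‖ := by
  rcases eq_or_ne x 0 with rfl | hx
  · simp
  · have hnx : (0:ℝ) < ‖x‖ := norm_pos_iff.mpr hx
    have hu : ‖(‖x‖⁻¹ • x)‖ = 1 := by
      rw [norm_smul, norm_inv, norm_norm]; field_simp
    have h2 := h _ hu
    rw [map_smul, norm_smul, norm_inv, norm_norm] at h2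
    have h3 := mul_le_mul_of_nonneg_right h2 hnx.le
    calc c * ‖x‖ ≤ ‖x‖⁻¹ * ‖Λ x‖ * ‖x‖ := h3
      _ = ‖Λ x‖ := by field_simp

lemma aux_delta {f : X → Y} {xb : X} {Λ : X →L[ℝ] Y} (hf : HasFDerivAt f Λ xb)
    {ε : ℝ} (hε : 0 < ε) :
    ∃ δ : ℝ, 0 < δ ∧ ∀ x : X, ‖x - xb‖ ≤ δ →
      ‖f x - f xb - Λ (x - xb)‖ ≤ ε * ‖x - xb‖ := by
  have h := hf.isLittleO.def hε
  rw [Metric.eventually_nhds_iff] at h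
  obtain ⟨δ, hδ, hh⟩ := h
  refine ⟨δ/2, by linarith, fun x hx => ?_⟩
  exact hh (by rw [dist_eq_norm]; linarith)

lemma aux_mem {f : X → Y} {xb : X} {Λ : X →L[ℝ] Y} (hf : HasFDerivAt f Λ xb)
    {c ε : ℝ} (hc : ∀ u : X, ‖u‖ = 1 → c ≤ ‖Λ u‖) (hε : 0 < ε) (hεc : ε < c) :
    (c - ε)⁻¹ ∈ {κ : ℝ | 0 ≤ κ ∧ ∃ r : ℝ, 0 < r ∧ ∀ x ∈ Metric.closedBall xb r,
      ‖x - xb‖ ≤ κ * ‖f x - f xb‖} := by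
  obtain ⟨δ, hδ, hδ2⟩ := aux_delta hf hε
  have hce : (0:ℝ) < c - ε := by linarith
  refine ⟨by positivity, δ, hδ, fun x hx => ?_⟩
  rw [Metric.mem_closedBall, dist_eq_norm] at hx
  have h1 := hδ2 x hx
  have h2 : c * ‖x - xb‖ ≤ ‖Λ (x - xb)‖ := aux_scale Λ hc _
  have h3 : ‖Λ (x - xb)‖ ≤ ‖f x - f xb‖ + ε * ‖x - xb‖ := by
    have h5 : (f x - f xb) - (f x - f xb - Λ (x - xb)) = Λ (x - xb) := by abel
    have h4 : ‖(f x - f xb) - (f x - f xb - Λ (x - xb))‖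
        ≤ ‖f x - f xb‖ + ‖f x - f xb - Λ (x - xb)‖ := norm_sub_le _ _
    rw [h5] at h4
    linarith
  have h6 : (c - ε) * ‖x - xb‖ ≤ ‖f x - f xb‖ := by nlinarith [norm_nonneg (x - xb)]
  rw [inv_mul_eq_div, le_div_iff₀ hce]
  nlinarith [h6]

lemma aux_exists_c {Λ : X →L[ℝ] Y} (ha : 0 < injConst (fun u => Λ u)) :
    ∃ c : ℝ, 0 < c ∧ ∀ u : X, ‖u‖ = 1 → c ≤ ‖Λ u‖ := by
  by_cases hX : ∃ u : X, ‖u‖ = 1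
  · obtain ⟨u0, hu0⟩ := hX
    have hle : injConst (fun u => Λ u) ≤ ENNReal.ofReal ‖Λ u0‖ :=
      iInf_le (fun u : {u : X // ‖u‖ = 1} => ENNReal.ofReal ‖Λ u.1‖) ⟨u0, hu0⟩
    have hafin : injConst (fun u => Λ u) ≠ ⊤ :=
      ne_top_of_le_ne_top ENNReal.ofReal_ne_top hle
    refine ⟨(injConst (fun u => Λ u)).toReal, ENNReal.toReal_pos ha.ne' hafin, ?_⟩
    intro u hu
    have h1 : injConst (fun u => Λ u) ≤ ENNReal.ofReal ‖Λ u‖ :=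
      iInf_le (fun u : {u : X // ‖u‖ = 1} => ENNReal.ofReal ‖Λ u.1‖) ⟨u, hu⟩
    have h2 := ENNReal.toReal_mono ENNReal.ofReal_ne_top h1
    rwa [ENNReal.toReal_ofReal (norm_nonneg _)] at h2
  · exact ⟨1, one_pos, fun u hu => absurd ⟨u, hu⟩ hX⟩

end Aux

/-- A Fréchet differentiable map `f` is strongly metrically
subregular at `xb` iff `α(Df(xb)) > 0`, in which case
`subreg f(xb) ≤ 1/α(Df(xb))`; in finite dimensions, `f` is strongly metrically
subregular at `xb` iff `ker Df(xb) = {0}`. -/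
theorem strong_subreg_of_differentiable {X Y : Type*}
    [NormedAddCommGroup X] [NormedSpace ℝ X] [NormedAddCommGroup Y] [NormedSpace ℝ Y]
    (f : X → Y) (xb : X) (Λ : X →L[ℝ] Y) (hf : HasFDerivAt f Λ xb) :
    (IsStronglyMetricallySubregularMap f xb ↔ 0 < injConst (fun u => Λ u)) ∧
    (0 < injConst (fun u => Λ u) →
      ENNReal.ofReal (subregModMap f xb) ≤ 1 / injConst (fun u => Λ u)) ∧
    (FiniteDimensional ℝ X → FiniteDimensional ℝ Y →
      (IsStronglyMetricallySubregularMap f xb ↔ LinearMap.ker (Λ : X →ₗ[ℝ] Y) = ⊥)) := by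
  have key_fwd : IsStronglyMetricallySubregularMap f xb → 0 < injConst (fun u => Λ u) := by
    rintro ⟨κ, hκ0, r, hr, H⟩
    by_cases hX : ∃ u : X, ‖u‖ = 1
    · obtain ⟨u0, hu0⟩ := hX
      have hκ : 0 < κ := by
        rcases lt_or_eq_of_le hκ0 with h | h
        · exact h
        · exfalso
          have hx : xb + r • u0 ∈ Metric.closedBall xb r := by
            simp [Metric.mem_closedBall, dist_eq_norm, norm_smul, hu0, abs_of_pos hr]
          have h1 := H _ hx
          rw [← h, zero_mul, add_sub_cancel_left, norm_smul, Real.norm_eq_abs,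
            abs_of_pos hr, hu0, mul_one] at h1
          linarith
      have hε : (0:ℝ) < 1/(2*κ) := by positivity
      obtain ⟨δ, hδ, hδ2⟩ := aux_delta hf hε
      have hc : ∀ u : X, ‖u‖ = 1 → 1/(2*κ) ≤ ‖Λ u‖ := by
        intro u hu
        set t := min r δ with ht
        have htp : 0 < t := lt_min hr hδ
        have hnorm : ‖xb + t • u - xb‖ = t := by
          rw [add_sub_cancel_left, norm_smul, Real.norm_eq_abs, abs_of_pos htp, hu, mul_one]
        have hx : xb + t • u ∈ Metric.closedBall xb r := by
          rw [Metric.mem_closedBall, dist_eq_norm, hnorm]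
          exact min_le_left r δ
        have h1 := H _ hx
        rw [hnorm] at h1
        have h2 := hδ2 (xb + t • u) (by rw [hnorm]; exact min_le_right r δ)
        rw [add_sub_cancel_left] at h2
        have hΛt : ‖Λ (t • u)‖ = t * ‖Λ u‖ := by
          rw [map_smul, norm_smul, Real.norm_eq_abs, abs_of_pos htp]
        have hnt : ‖t • u‖ = t := by
          rw [norm_smul, Real.norm_eq_abs, abs_of_pos htp, hu, mul_one]
        rw [hnt] at h2
        have hfn : ‖f (xb + t • u) - f xb‖ ≤ t * ‖Λ u‖ + (1/(2*κ)) * t := by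
          have h5 : f (xb + t • u) - f xb
              = (f (xb + t • u) - f xb - Λ (t • u)) + Λ (t • u) := by abel
          calc ‖f (xb + t • u) - f xb‖
              = ‖(f (xb + t • u) - f xb - Λ (t • u)) + Λ (t • u)‖ := by rw [← h5]
            _ ≤ ‖f (xb + t • u) - f xb - Λ (t • u)‖ + ‖Λ (t • u)‖ := norm_add_le _ _
            _ ≤ (1/(2*κ)) * t + t * ‖Λ u‖ := by rw [hΛt]; linarith
            _ = t * ‖Λ u‖ + (1/(2*κ)) * t := by ring
        have key : t ≤ κ * (t * ‖Λ u‖ + (1/(2*κ)) * t) :=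
          h1.trans (mul_le_mul_of_nonneg_left hfn hκ0)
        have e1 : κ * (t * ‖Λ u‖ + (1/(2*κ)) * t) = κ * t * ‖Λ u‖ + (κ * (1/(2*κ))) * t := by
          ring
        have hhalf : κ * (1/(2*κ)) = 1/2 := by field_simp
        rw [e1, hhalf] at key
        have key2 : t ≤ 2 * κ * t * ‖Λ u‖ := by linarith
        rw [div_le_iff₀ (by positivity : (0:ℝ) < 2*κ)]
        nlinarith [key2, htp]
      calc (0:ℝ≥0∞) < ENNReal.ofReal (1/(2*κ)) := ENNReal.ofReal_pos.mpr hε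
        _ ≤ _ := aux_le_injConst _ hc
    · haveI : IsEmpty {u : X // ‖u‖ = 1} := ⟨fun u => hX ⟨u.1, u.2⟩⟩
      show (0:ℝ≥0∞) < ⨅ u : {u : X // ‖u‖ = 1}, ENNReal.ofReal ‖Λ u.1‖
      rw [iInf_of_empty]
      exact ENNReal.zero_lt_top
  have triv_mem : (¬ ∃ u : X, ‖u‖ = 1) →
      (0:ℝ) ∈ {κ : ℝ | 0 ≤ κ ∧ ∃ r : ℝ, 0 < r ∧ ∀ x ∈ Metric.closedBall xb r,
        ‖x - xb‖ ≤ κ * ‖f x - f xb‖} := by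
    intro hX
    refine ⟨le_refl 0, 1, one_pos, fun x _ => ?_⟩
    have hx0 : x - xb = 0 := by
      by_contra h
      exact hX ⟨‖x - xb‖⁻¹ • (x - xb), by
        rw [norm_smul, norm_inv, norm_norm, inv_mul_cancel₀ (norm_ne_zero_iff.mpr h)]⟩
    rw [hx0, norm_zero, zero_mul]
  have key_bwd : 0 < injConst (fun u => Λ u) → IsStronglyMetricallySubregularMap f xb := by
    intro ha
    by_cases hX : ∃ u : X, ‖u‖ = 1
    · obtain ⟨c, hcpos, hc⟩ := aux_exists_c ha
      have hmem := aux_mem hf hc (by positivity : (0:ℝ) < c/2) (by linarith : c/2 < c)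
      exact ⟨(c - c/2)⁻¹, hmem.1, hmem.2⟩
    · have h0 := triv_mem hX
      exact ⟨0, h0.1, h0.2⟩
  refine ⟨⟨key_fwd, key_bwd⟩, ?_, ?_⟩
  · -- modulus bound
    intro ha
    by_cases hX : ∃ u : X, ‖u‖ = 1
    · obtain ⟨u0, hu0⟩ := hX
      have hle : injConst (fun u => Λ u) ≤ ENNReal.ofReal ‖Λ u0‖ :=
        iInf_le (fun u : {u : X // ‖u‖ = 1} => ENNReal.ofReal ‖Λ u.1‖) ⟨u0, hu0⟩
      have hafin : injConst (fun u => Λ u) ≠ ⊤ :=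
        ne_top_of_le_ne_top ENNReal.ofReal_ne_top hle
      set c := (injConst (fun u => Λ u)).toReal with hcdef
      have hcpos : 0 < c := ENNReal.toReal_pos ha.ne' hafin
      have hc : ∀ u : X, ‖u‖ = 1 → c ≤ ‖Λ u‖ := by
        intro u hu
        have h1 : injConst (fun u => Λ u) ≤ ENNReal.ofReal ‖Λ u‖ :=
          iInf_le (fun u : {u : X // ‖u‖ = 1} => ENNReal.ofReal ‖Λ u.1‖) ⟨u, hu⟩
        have h2 := ENNReal.toReal_mono ENNReal.ofReal_ne_top h1
        rwa [ENNReal.toReal_ofReal (norm_nonneg _)] at h2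
      have hbdd : BddBelow {κ : ℝ | 0 ≤ κ ∧ ∃ r : ℝ, 0 < r ∧
          ∀ x ∈ Metric.closedBall xb r, ‖x - xb‖ ≤ κ * ‖f x - f xb‖} :=
        ⟨0, fun κ hκ => hκ.1⟩
      have hSle : subregModMap f xb ≤ 1/c := by
        by_contra hcon
        push_neg at hcon
        set b := (1/c + subregModMap f xb)/2 with hbdef
        have hb1 : 1/c < b := by rw [hbdef]; linarith
        have hb2 : b < subregModMap f xb := by rw [hbdef]; linarith
        have hbpos : 0 < b := lt_trans (by positivity) hb1
        have h1b : 1 < c * b := by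
          have h := (mul_lt_mul_iff_right₀ hcpos).mpr hb1
          rwa [mul_one_div, div_self hcpos.ne'] at h
        have hεpos : 0 < c - 1/b := by
          have : 1/b < c := by rw [div_lt_iff₀ hbpos]; linarith [mul_comm c b]
          linarith
        have hεc : c - 1/b < c := by
          have : 0 < 1/b := by positivity
          linarith
        have hmem := aux_mem hf hc hεpos hεc
        have heq : (c - (c - 1/b))⁻¹ = b := by
          rw [_root_.sub_sub_cancel, one_div, inv_inv]
        rw [heq] at hmem
        have hcs : subregModMap f xb ≤ b := csInf_le hbdd hmem
        linarith
      calc ENNReal.ofReal (subregModMap f xb)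
          ≤ ENNReal.ofReal (1/c) := ENNReal.ofReal_le_ofReal hSle
        _ = 1 / ENNReal.ofReal c := by
            rw [one_div, one_div, ENNReal.ofReal_inv_of_pos hcpos]
        _ = 1 / injConst (fun u => Λ u) := by
            rw [hcdef, ENNReal.ofReal_toReal hafin]
    · have h0 := triv_mem hX
      have hbdd : BddBelow {κ : ℝ | 0 ≤ κ ∧ ∃ r : ℝ, 0 < r ∧
          ∀ x ∈ Metric.closedBall xb r, ‖x - xb‖ ≤ κ * ‖f x - f xb‖} :=
        ⟨0, fun κ hκ => hκ.1⟩
      have hcs : subregModMap f xb ≤ 0 := csInf_le hbdd h0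
      calc ENNReal.ofReal (subregModMap f xb)
          ≤ ENNReal.ofReal 0 := ENNReal.ofReal_le_ofReal hcs
        _ = 0 := ENNReal.ofReal_zero
        _ ≤ _ := zero_le
  · -- finite-dimensional characterization
    intro hFX _
    constructor
    · intro hsub
      obtain ⟨c, hcpos, hc⟩ := aux_exists_c (key_fwd hsub)
      rw [LinearMap.ker_eq_bot']
      intro x hx
      have h1 := aux_scale Λ hc x
      rw [show Λ x = 0 from hx, norm_zero] at h1
      have : ‖x‖ ≤ 0 := by nlinarith
      exact norm_le_zero_iff.mp this
    · intro hker
      apply key_bwd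
      by_cases hX : ∃ u : X, ‖u‖ = 1
      · haveI : ProperSpace X := FiniteDimensional.proper ℝ X
        have hcomp : IsCompact (Metric.sphere (0:X) 1) := isCompact_sphere 0 1
        have hne : (Metric.sphere (0:X) 1).Nonempty := by
          obtain ⟨u, hu⟩ := hX
          exact ⟨u, by simpa [mem_sphere_iff_norm] using hu⟩
        have hcont : ContinuousOn (fun u : X => ‖Λ u‖) (Metric.sphere 0 1) :=
          (Λ.continuous.norm).continuousOn
        obtain ⟨u0, hu0mem, hu0min⟩ := hcomp.exists_isMinOn hne hcont
        have hu0 : ‖u0‖ = 1 := by simpa [mem_sphere_iff_norm] using hu0mem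
        have hΛu0 : 0 < ‖Λ u0‖ := by
          rw [norm_pos_iff]
          intro h
          have hmem : u0 ∈ LinearMap.ker (Λ : X →ₗ[ℝ] Y) := LinearMap.mem_ker.mpr h
          rw [hker, Submodule.mem_bot] at hmem
          rw [hmem, norm_zero] at hu0
          exact one_ne_zero hu0.symm
        have hc : ∀ u : X, ‖u‖ = 1 → ‖Λ u0‖ ≤ ‖Λ u‖ := fun u hu =>
          hu0min (by simpa [mem_sphere_iff_norm] using hu)
        calc (0:ℝ≥0∞) < ENNReal.ofReal ‖Λ u0‖ := ENNReal.ofReal_pos.mpr hΛu0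
          _ ≤ _ := aux_le_injConst _ hc
      · haveI : IsEmpty {u : X // ‖u‖ = 1} := ⟨fun u => hX ⟨u.1, u.2⟩⟩
        show (0:ℝ≥0∞) < ⨅ u : {u : X // ‖u‖ = 1}, ENNReal.ofReal ‖Λ u.1‖
        rw [iInf_of_empty]
        exact ENNReal.zero_lt_top
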